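/- arXiv:1308.4283 — 4 statements merged into one kernel-verified Lean document; each statement's English description precedes it below -/
import Mathlib

section
/- No-Homomorphism Lemma: if H is a vertex-transitive finite simple graph and there exists a graph homomorphism from G to H, then |V(G)|/α(G) ≤ |V(H)|/α(H). -/
/-- The independence number of a simple graph: the clique number of the complement. -/
noncomputable def SimpleGraph.indepNum' {V : Type*} (G : SimpleGraph V) : ℕ := Gᶜ.cliqueNum

/-- No-Homomorphism Lemma. If H is vertex-transitive and G → H, then
|V(G)|/α(G) ≤ |V(H)|/α(H), stated in cross-multiplied form. -/
theorem no_homomorphism_lemma {V W : Type*} [Fintype V] [Fintype W]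
    (G : SimpleGraph V) (H : SimpleGraph W)
    (htrans : ∀ u v : W, ∃ π : H ≃g H, π u = v)
    (hhom : Nonempty (G →g H)) :
    Fintype.card V * H.indepNum' ≤ Fintype.card W * G.indepNum' := by
  classical
  obtain ⟨f⟩ := hhom
  cases isEmpty_or_nonempty W with
  | inl hW =>
      haveI : IsEmpty V := ⟨fun v => hW.false (f v)⟩
      simp
  | inr hW =>
  obtain ⟨S, hSclique, hScard⟩ := Hᶜ.exists_isNClique_cliqueNum
  haveI : Fintype (H ≃g H) :=
    Fintype.ofInjective (fun π : H ≃g H => (π : W → W)) (by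
      intro a b h
      exact RelIso.ext (fun x => congrFun h x))
  -- all fibers {π : π w = u} have the same cardinality
  have key : ∀ w u w' u' : W,
      (Finset.univ.filter fun π : H ≃g H => π w = u).card
        = (Finset.univ.filter fun π : H ≃g H => π w' = u').card := by
    intro w u w' u'
    obtain ⟨σ, hσ⟩ := htrans w' w
    obtain ⟨τ, hτ⟩ := htrans u u'
    refine Finset.card_nbij' (fun π => σ.trans (π.trans τ))
      (fun ρ => σ.symm.trans (ρ.trans τ.symm)) ?_ ?_ ?_ ?_
    · intro π hπ
      simp only [Finset.coe_filter, Set.mem_setOf_eq, Finset.mem_filter, Finset.mem_univ, true_and] at hπ ⊢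
      simp [RelIso.trans_apply, hσ, hπ, hτ]
    · intro ρ hρ
      simp only [Finset.coe_filter, Set.mem_setOf_eq, Finset.mem_filter, Finset.mem_univ, true_and] at hρ ⊢
      have h1 : σ.symm w = w' := σ.symm_apply_eq.mpr hσ.symm
      have h2 : τ.symm u' = u := τ.symm_apply_eq.mpr hτ.symm
      simp [RelIso.trans_apply, h1, hρ, h2]
    · intro π _
      refine RelIso.ext (fun x => ?_)
      simp [RelIso.trans_apply]
    · intro ρ _
      refine RelIso.ext (fun x => ?_)
      simp [RelIso.trans_apply]
  set w₀ : W := Classical.arbitrary W with hw₀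
  set c : ℕ := (Finset.univ.filter fun π : H ≃g H => π w₀ = w₀).card with hc
  have hcpos : 0 < c := by
    refine Finset.card_pos.mpr ⟨RelIso.refl _, ?_⟩
    simp
  -- cardinality of the automorphism group
  have hAut : Fintype.card (H ≃g H) = Fintype.card W * c := by
    have := Finset.card_eq_sum_card_fiberwise
      (f := fun π : H ≃g H => π w₀) (s := Finset.univ) (t := Finset.univ)
      (fun x _ => Finset.mem_univ _)
    rw [← Finset.card_univ, this]
    rw [Finset.sum_congr rfl (fun u _ => key w₀ u w₀ w₀)]
    simp [Finset.sum_const, Finset.card_univ, mul_comm, hc]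
  -- the double-counted sum
  set T : ℕ := ∑ π : H ≃g H, (Finset.univ.filter fun v : V => π.symm (f v) ∈ S).card
    with hT
  -- upper bound: each preimage is independent in G
  have hupper : T ≤ Fintype.card W * c * G.indepNum' := by
    have hle : ∀ π : H ≃g H,
        (Finset.univ.filter fun v : V => π.symm (f v) ∈ S).card ≤ G.indepNum' := by
      intro π
      have hclique : Gᶜ.IsClique (Finset.univ.filter fun v : V => π.symm (f v) ∈ S) := by
        intro v₁ h₁ v₂ h₂ hne
        simp only [Finset.coe_filter, Set.mem_setOf_eq, Finset.mem_univ, true_and] at h₁ h₂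
        rw [SimpleGraph.compl_adj]
        refine ⟨hne, fun hadj => ?_⟩
        have hH : H.Adj (f v₁) (f v₂) := f.map_adj hadj
        have hH' : H.Adj (π.symm (f v₁)) (π.symm (f v₂)) := π.symm.map_adj_iff.mpr hH
        by_cases heq : π.symm (f v₁) = π.symm (f v₂)
        · rw [heq] at hH'
          exact H.loopless.irrefl _ hH'
        · have := hSclique h₁ h₂ heq
          rw [SimpleGraph.compl_adj] at this
          exact this.2 hH'
      exact hclique.card_le_cliqueNum
    calc T ≤ ∑ _π : H ≃g H, G.indepNum' := Finset.sum_le_sum (fun π _ => hle π)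
      _ = Fintype.card (H ≃g H) * G.indepNum' := by
          simp [Finset.sum_const, Finset.card_univ]
      _ = Fintype.card W * c * G.indepNum' := by rw [hAut]
  -- exact count: T = |V| * α(H) * c
  have hcount : ∀ u : W,
      (Finset.univ.filter fun π : H ≃g H => π.symm u ∈ S).card = H.indepNum' * c := by
    intro u
    have hfib := Finset.card_eq_sum_card_fiberwise
      (f := fun π : H ≃g H => π.symm u) (s := Finset.univ.filter fun π => π.symm u ∈ S)
      (t := S) (by intro x hx; simpa using (Finset.mem_filter.mp hx).2)
    rw [hfib]
    have : ∀ s ∈ S,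
        ((Finset.univ.filter fun π : H ≃g H => π.symm u ∈ S).filter
          fun π => π.symm u = s).card = c := by
      intro s hs
      have hseteq : ((Finset.univ.filter fun π : H ≃g H => π.symm u ∈ S).filter
          fun π => π.symm u = s) = Finset.univ.filter fun π : H ≃g H => π s = u := by
        ext π
        simp only [Finset.mem_filter, Finset.mem_univ, true_and]
        constructor
        · rintro ⟨-, h2⟩
          rw [← h2]; exact π.apply_symm_apply u
        · intro h
          have : π.symm u = s := π.toEquiv.symm_apply_eq.mpr h.symm
          exact ⟨this ▸ hs, this⟩
      rw [hseteq]
      exact key s u w₀ w₀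
    rw [Finset.sum_congr rfl this]
    simp [hScard, SimpleGraph.indepNum', mul_comm]
  have hlower : T = Fintype.card V * (H.indepNum' * c) := by
    have hswap : T = ∑ v : V,
        (Finset.univ.filter fun π : H ≃g H => π.symm (f v) ∈ S).card := by
      rw [hT]
      simp only [Finset.card_filter]
      exact Finset.sum_comm
    rw [hswap, Finset.sum_congr rfl (fun v _ => hcount (f v))]
    simp [Finset.sum_const, Finset.card_univ]
  have hfinal : Fintype.card V * (H.indepNum' * c) ≤ Fintype.card W * c * G.indepNum' := by
    rw [← hlower]; exact hupper
  have : Fintype.card V * H.indepNum' * c ≤ Fintype.card W * G.indepNum' * c := by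
    calc Fintype.card V * H.indepNum' * c = Fintype.card V * (H.indepNum' * c) := by ring
      _ ≤ Fintype.card W * c * G.indepNum' := hfinal
      _ = Fintype.card W * G.indepNum' * c := by ring
  exact Nat.le_of_mul_le_mul_right this hcpos
end

section
/- Alon's linear-algebra bound: let G be a finite graph, 𝔽 a field, and ℱ a finite-dimensional subspace of the polynomial ring 𝔽[x₁,…,x_k]. Suppose each vertex u of G is assigned a pair (f_u, c_u) ∈ ℱ × 𝔽^k such that f_u(c_u) ≠ 0 for all u, and f_u(c_v) = 0 whenever u ≠ v are non-adjacent. Then α(G) ≤ dim(ℱ). -/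
/-- Alon's linear-algebra bound: a polynomial representation of G
over a subspace ℱ gives α(G) ≤ dim ℱ. -/
theorem alon_linear_algebra_bound {V : Type*} [Fintype V] (G : SimpleGraph V)
    {F : Type*} [Field F] (k : ℕ)
    (ℱ : Submodule F (MvPolynomial (Fin k) F)) [FiniteDimensional F ℱ]
    (f : V → MvPolynomial (Fin k) F) (c : V → Fin k → F)
    (hmem : ∀ u, f u ∈ ℱ)
    (hself : ∀ u, MvPolynomial.eval (c u) (f u) ≠ 0)
    (hother : ∀ u v, u ≠ v → ¬G.Adj u v → MvPolynomial.eval (c v) (f u) = 0) :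
    G.indepNum' ≤ Module.finrank F ℱ := by
  classical
  obtain ⟨s, hs⟩ := SimpleGraph.exists_isNClique_cliqueNum (G := Gᶜ)
  rw [SimpleGraph.indepNum', ← hs.card_eq]
  have hclique := hs.isClique
  have g : s → ℱ := fun u => ⟨f u, hmem u⟩
  have hli : LinearIndependent F (fun u : s => (⟨f u, hmem u⟩ : ℱ)) := by
    rw [Fintype.linearIndependent_iff]
    intro a ha v
    have ha' : (∑ u : s, a u • f u) = 0 := by
      have := congrArg (Subtype.val) ha
      simpa using this
    have heval : (MvPolynomial.eval (c v)) (∑ u : s, a u • f u) = 0 := by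
      rw [ha']; simp
    rw [map_sum] at heval
    simp only [smul_eq_mul, map_mul, MvPolynomial.eval_C, Algebra.smul_def,
      MvPolynomial.algebraMap_eq] at heval
    rw [Finset.sum_eq_single v] at heval
    · exact (mul_eq_zero.mp heval).resolve_right (hself v)
    · intro u _ huv
      have hne : (u : V) ≠ (v : V) := fun h => huv (Subtype.ext h)
      have hadj := hclique u.2 v.2 hne
      rw [SimpleGraph.compl_adj] at hadj
      rw [hother u v hne hadj.2, mul_zero]
    · intro h; exact absurd (Finset.mem_univ v) h
  calc s.card = Fintype.card s := (Fintype.card_coe s).symm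
    _ ≤ Module.finrank F ℱ := hli.fintype_card_le_finrank
end

section
/- Barrington–Beigel–Rudich: let p be a prime and k, ℓ integers with k > p^ℓ. Then there exists a multilinear polynomial f ∈ ℤ_p[x₁,…,x_k] of degree at most p^ℓ − 1 such that for every c ∈ {0,1}^k, f(c) ≡ 1 (mod p) if the Hamming weight of c is divisible by p^ℓ, and f(c) ≡ 0 (mod p) otherwise. -/
open MvPolynomial Finset

/-- Binomial coefficients mod `p` with lower index `m < p^ℓ` only depend on `n % p^ℓ`. -/
private lemma choose_mod_pow_eq (p : ℕ) (hp : p.Prime) :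
    ∀ (ℓ m n : ℕ), m < p ^ ℓ →
      ((n.choose m : ZMod p) = ((n % p ^ ℓ).choose m : ZMod p)) := by
  haveI : Fact p.Prime := ⟨hp⟩
  intro ℓ
  induction ℓ with
  | zero =>
    intro m n hm
    rw [pow_zero] at hm
    interval_cases m
    simp
  | succ ℓ ih =>
    intro m n hm
    have lucas : ∀ a b : ℕ, ((a.choose b : ZMod p)) =
        (((a % p).choose (b % p) * ((a / p).choose (b / p)) : ℕ) : ZMod p) := by
      intro a b
      exact_mod_cast (ZMod.natCast_eq_natCast_iff _ _ _).mpr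
        (Choose.choose_modEq_choose_mod_mul_choose_div_nat (p := p) (n := a) (k := b))
    have hdiv : m / p < p ^ ℓ := Nat.div_lt_of_lt_mul (by rw [← pow_succ']; exact hm)
    have h1 : n % p ^ (ℓ + 1) % p = n % p :=
      Nat.mod_mod_of_dvd _ (dvd_pow_self p (Nat.succ_ne_zero ℓ))
    have h2 : n % p ^ (ℓ + 1) / p = n / p % p ^ ℓ := by
      rw [pow_succ', Nat.mod_mul_right_div_self]
    rw [lucas n m, lucas (n % p ^ (ℓ + 1)) m, h1, h2]
    push_cast
    rw [ih (m / p) (n / p) hdiv]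

/-- Invertibility of the unitriangular binomial matrix: any function on `Fin N` is a
combination of binomial coefficient functions. -/
private lemma exists_choose_coeffs (p N : ℕ) [Fact p.Prime] (t : Fin N → ZMod p) :
    ∃ a : Fin N → ZMod p,
      ∀ w : Fin N, ∑ m : Fin N, ((w : ℕ).choose (m : ℕ) : ZMod p) * a m = t w := by
  set M : Matrix (Fin N) (Fin N) (ZMod p) :=
    Matrix.of (fun w m => ((w : ℕ).choose (m : ℕ) : ZMod p)) with hMdef
  have hM : M.BlockTriangular OrderDual.toDual := by
    intro i j h
    have hij : (i : ℕ) < (j : ℕ) := h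
    simp only [hMdef, Matrix.of_apply]
    rw [Nat.choose_eq_zero_of_lt hij, Nat.cast_zero]
  have hdet : M.det = 1 := by
    rw [Matrix.det_of_lowerTriangular M hM]
    simp [hMdef]
  have hs : Function.Surjective M.mulVec :=
    Matrix.mulVec_surjective_iff_isUnit.2
      (by rw [Matrix.isUnit_iff_isUnit_det, hdet]; exact isUnit_one)
  obtain ⟨a, ha⟩ := hs t
  refine ⟨a, fun w => ?_⟩
  simpa [Matrix.mulVec, dotProduct, hMdef] using congrFun ha w

/-- Evaluating the elementary symmetric polynomial at a 0/1 vector gives a binomial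
coefficient of the Hamming weight. -/
private lemma eval_esymm_bool (p k m : ℕ) (c : Fin k → Bool) :
    MvPolynomial.eval (fun i => if c i then (1 : ZMod p) else 0)
        (esymm (Fin k) (ZMod p) m) =
      (((Finset.univ.filter fun i => c i = true).card.choose m : ℕ) : ZMod p) := by
  classical
  set T := Finset.univ.filter fun i : Fin k => c i = true with hT
  rw [esymm, map_sum]
  have key : ∀ t ∈ powersetCard m (univ : Finset (Fin k)),
      MvPolynomial.eval (fun i => if c i then (1 : ZMod p) else 0) (∏ i ∈ t, X i) =
        if t ⊆ T then 1 else 0 := by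
    intro t _
    rw [map_prod]
    simp only [eval_X]
    by_cases h : t ⊆ T
    · rw [if_pos h]
      refine Finset.prod_eq_one fun i hi => ?_
      have := h hi
      rw [hT, Finset.mem_filter] at this
      simp [this.2]
    · rw [if_neg h]
      obtain ⟨i, hit, hiT⟩ := Finset.not_subset.1 h
      refine Finset.prod_eq_zero hit ?_
      rw [hT, Finset.mem_filter] at hiT
      simp only [Finset.mem_univ, true_and] at hiT
      simp [hiT]
  rw [Finset.sum_congr rfl key, Finset.sum_boole]
  have hfilt : (powersetCard m (univ : Finset (Fin k))).filter (· ⊆ T) = powersetCard m T := by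
    ext t
    simp [Finset.mem_powersetCard, Finset.mem_filter, Finset.subset_univ, and_comm]
  rw [hfilt, Finset.card_powersetCard]

/-- Barrington–Beigel–Rudich low-degree multilinear polynomial over ℤ_p
detecting divisibility of the Hamming weight by p^ℓ. -/
theorem barrington_beigel_rudich (p k ℓ : ℕ) (hp : p.Prime) (hk : p ^ ℓ < k) :
    ∃ f : MvPolynomial (Fin k) (ZMod p),
      (∀ i : Fin k, f.degreeOf i ≤ 1) ∧
      f.totalDegree ≤ p ^ ℓ - 1 ∧
      ∀ c : Fin k → Bool,
        MvPolynomial.eval (fun i => if c i then (1 : ZMod p) else 0) f =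
          if p ^ ℓ ∣ (Finset.univ.filter fun i => c i = true).card then 1 else 0 := by
  classical
  haveI : Fact p.Prime := ⟨hp⟩
  haveI : Fact (1 < p) := ⟨hp.one_lt⟩
  set N := p ^ ℓ with hNdef
  have hN : 0 < N := pow_pos hp.pos ℓ
  obtain ⟨a, ha⟩ := exists_choose_coeffs p N (fun w => if (w : ℕ) = 0 then 1 else 0)
  refine ⟨∑ m : Fin N, MvPolynomial.C (a m) * esymm (Fin k) (ZMod p) (m : ℕ), ?_, ?_, ?_⟩
  · -- multilinearity
    intro i
    refine le_trans (degreeOf_sum_le _ _ _) (Finset.sup_le fun m _ => ?_)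
    refine le_trans (degreeOf_mul_le _ _ _) ?_
    rw [degreeOf_C, zero_add, esymm]
    refine le_trans (degreeOf_sum_le _ _ _) (Finset.sup_le fun t _ => ?_)
    refine le_trans (degreeOf_prod_le _ _ _) ?_
    have : ∀ j ∈ t, (X j : MvPolynomial (Fin k) (ZMod p)).degreeOf i =
        if i = j then 1 else 0 := fun j _ => degreeOf_X i j
    rw [Finset.sum_congr rfl this, Finset.sum_ite_eq]
    split <;> simp
  · -- total degree
    refine le_trans (totalDegree_finset_sum _ _) (Finset.sup_le fun m _ => ?_)
    refine le_trans (totalDegree_mul _ _) ?_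
    rw [totalDegree_C, zero_add]
    have h1 : (esymm (Fin k) (ZMod p) (m : ℕ)).totalDegree ≤ (m : ℕ) := by
      rw [esymm]
      refine le_trans (totalDegree_finset_sum _ _) (Finset.sup_le fun t ht => ?_)
      refine le_trans (totalDegree_finset_prod _ _) ?_
      have hcard : t.card = (m : ℕ) := (Finset.mem_powersetCard.1 ht).2
      calc ∑ j ∈ t, (X j : MvPolynomial (Fin k) (ZMod p)).totalDegree
          ≤ ∑ _j ∈ t, 1 := Finset.sum_le_sum fun j _ => le_of_eq (totalDegree_X j)
        _ = (m : ℕ) := by rw [Finset.sum_const, smul_eq_mul, mul_one, hcard]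
    refine le_trans h1 ?_
    have := m.isLt
    omega
  · -- evaluation
    intro c
    set w := (Finset.univ.filter fun i => c i = true).card with hw
    rw [map_sum]
    have heval : ∀ m : Fin N, MvPolynomial.eval (fun i => if c i then (1 : ZMod p) else 0)
        (MvPolynomial.C (a m) * esymm (Fin k) (ZMod p) (m : ℕ)) =
        ((w % N).choose (m : ℕ) : ZMod p) * a m := by
      intro m
      rw [map_mul, eval_C, eval_esymm_bool, ← hw,
        choose_mod_pow_eq p hp ℓ (m : ℕ) w m.isLt, mul_comm]
    rw [Finset.sum_congr rfl fun m _ => heval m]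
    have hw' : w % N < N := Nat.mod_lt _ hN
    have := ha ⟨w % N, hw'⟩
    simp only at this
    rw [this]
    have : N ∣ w ↔ w % N = 0 := Nat.dvd_iff_mod_eq_zero
    simp only [hNdef] at this ⊢
    rw [if_congr this rfl rfl]
end

section
/- Let p be an odd prime, ℓ a positive integer, and k = 4p^ℓ − 1. Then for every positive integer m, the independence number of the m-fold strong power of the quarter-orthogonality graph satisfies α(H_k^{⊠m}) ≤ (C(k,0) + C(k,1) + ⋯ + C(k, p^ℓ − 1))^m, where C(k,i) denotes the binomial coefficient. -/
/-- Vertices of the quarter-orthogonality graph: even Hamming weight binary strings. -/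
def QVertex (k : ℕ) := {u : Fin k → ZMod 2 // Even (hammingNorm u)}

/-- The quarter-orthogonality graph `H_k`: even-weight binary strings of length k,
adjacent iff their Hamming distance is (k+1)/2. -/
def Hgraph (k : ℕ) : SimpleGraph (QVertex k) where
  Adj x y := x ≠ y ∧ hammingDist x.1 y.1 = (k + 1) / 2
  symm := ⟨fun x y => by
    rintro ⟨h1, h2⟩
    exact ⟨h1.symm, by rwa [hammingDist_comm]⟩⟩
  loopless := ⟨fun x => by simp⟩

/-- The m-fold strong power of a simple graph. -/
def SimpleGraph.strongPow {α : Type*} (m : ℕ) (G : SimpleGraph α) :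
    SimpleGraph (Fin m → α) where
  Adj x y := x ≠ y ∧ ∀ i, x i = y i ∨ G.Adj (x i) (y i)
  symm := ⟨fun x y => by
    rintro ⟨h1, h2⟩
    exact ⟨h1.symm, fun i => (h2 i).imp Eq.symm (fun h => G.adj_symm h)⟩⟩
  loopless := ⟨fun x => by simp⟩

open Finset

noncomputable section AuxQOG

instance (k : ℕ) : Fintype (QVertex k) :=
  inferInstanceAs (Fintype {u : Fin k → ZMod 2 // Even (hammingNorm u)})

instance (k : ℕ) : DecidableEq (QVertex k) :=
  inferInstanceAs (DecidableEq {u : Fin k → ZMod 2 // Even (hammingNorm u)})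

variable (p k : ℕ)

/-- indicator cast from `ZMod 2` to `ZMod p`. -/
def qc (a : ZMod 2) : ZMod p := if a = 1 then 1 else 0

lemma zmod2_cases : ∀ a : ZMod 2, a = 0 ∨ a = 1 := by decide

lemma qc_idem (a : ZMod 2) : qc p a * qc p a = qc p a := by
  unfold qc; split <;> simp

/-- monomial function on one block. -/
def chi (s : Finset (Fin k)) : QVertex k → ZMod p := fun v => ∏ i ∈ s, qc p (v.1 i)

/-- span of monomials of degree at most `d`. -/
def Dspan (d : ℕ) : Submodule (ZMod p) (QVertex k → ZMod p) :=
  Submodule.span (ZMod p) {f | ∃ s : Finset (Fin k), s.card ≤ d ∧ f = chi p k s}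

lemma Dspan_mono {d d' : ℕ} (h : d ≤ d') : Dspan p k d ≤ Dspan p k d' := by
  apply Submodule.span_mono
  rintro f ⟨s, hs, rfl⟩
  exact ⟨s, hs.trans h, rfl⟩

lemma chi_mem_Dspan {s : Finset (Fin k)} {d : ℕ} (h : s.card ≤ d) :
    chi p k s ∈ Dspan p k d :=
  Submodule.subset_span ⟨s, h, rfl⟩

lemma one_mem_Dspan (d : ℕ) : (1 : QVertex k → ZMod p) ∈ Dspan p k d := by
  have : chi p k (∅ : Finset (Fin k)) = 1 := by
    funext v; simp [chi]
  have h := chi_mem_Dspan p k (s := (∅ : Finset (Fin k))) (d := d) (by simp)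
  rwa [this] at h

lemma prod_idem {ι M : Type*} [DecidableEq ι] [CommMonoid M] (a : ι → M)
    (ha : ∀ i, a i * a i = a i) (s t : Finset ι) :
    (∏ i ∈ s, a i) * ∏ i ∈ t, a i = ∏ i ∈ s ∪ t, a i := by
  induction t using Finset.induction with
  | empty => simp
  | @insert i t hit ih =>
    rw [Finset.prod_insert hit, ← mul_assoc, mul_comm (∏ i ∈ s, a i) (a i), mul_assoc, ih]
    by_cases h : i ∈ s ∪ t
    · rw [Finset.union_insert, Finset.insert_eq_self.2 h]
      rw [← Finset.mul_prod_erase _ _ h, ← mul_assoc, ha, Finset.mul_prod_erase _ _ h]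
    · rw [Finset.union_insert, Finset.prod_insert h]

lemma chi_mul_chi (s t : Finset (Fin k)) :
    chi p k s * chi p k t = chi p k (s ∪ t) := by
  funext v
  exact prod_idem (fun i => qc p (v.1 i)) (fun i => qc_idem p _) s t

lemma Dspan_mul_mem {f g : QVertex k → ZMod p} {d e : ℕ}
    (hf : f ∈ Dspan p k d) (hg : g ∈ Dspan p k e) : f * g ∈ Dspan p k (d + e) := by
  have h := Submodule.mul_mem_mul hf hg
  simp only [Dspan] at h ⊢
  rw [Submodule.span_mul_span] at h
  refine Submodule.span_le.2 ?_ h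
  rintro x ⟨a, ⟨s, hs, rfl⟩, b, ⟨t, ht, rfl⟩, rfl⟩
  show chi p k s * chi p k t ∈ _
  rw [chi_mul_chi]
  exact Submodule.subset_span ⟨s ∪ t, (Finset.card_union_le s t).trans (by omega), rfl⟩

lemma Dspan_pow_mem {f : QVertex k → ZMod p} {d : ℕ} (hf : f ∈ Dspan p k d) (n : ℕ) :
    f ^ n ∈ Dspan p k (n * d) := by
  induction n with
  | zero => simpa using one_mem_Dspan p k 0
  | succ n ih =>
    rw [pow_succ, Nat.succ_mul]
    exact Dspan_mul_mem p k ih hf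

lemma Dspan_prod_mem {ι : Type*} (A : Finset ι) (f : ι → QVertex k → ZMod p) (d : ι → ℕ)
    (h : ∀ i ∈ A, f i ∈ Dspan p k (d i)) :
    ∏ i ∈ A, f i ∈ Dspan p k (∑ i ∈ A, d i) := by
  classical
  induction A using Finset.induction with
  | empty => simpa using one_mem_Dspan p k 0
  | @insert i A hiA ih =>
    rw [Finset.prod_insert hiA, Finset.sum_insert hiA]
    exact Dspan_mul_mem p k (h i (Finset.mem_insert_self i A))
      (ih fun j hj => h j (Finset.mem_insert_of_mem hj))

/-- the XOR indicator function of one coordinate. -/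
def zf (u : QVertex k) (i : Fin k) : QVertex k → ZMod p :=
  fun x => qc p (x.1 i + u.1 i)

lemma zf_mem_Dspan (u : QVertex k) (i : Fin k) : zf p k u i ∈ Dspan p k 1 := by
  have hchi : chi p k {i} = fun x => qc p (x.1 i) := by
    funext x; simp [chi]
  rcases zmod2_cases (u.1 i) with h | h
  · have : zf p k u i = chi p k {i} := by
      funext x; simp [zf, hchi, h]
    rw [this]; exact chi_mem_Dspan p k (by simp)
  · have : zf p k u i = 1 - chi p k {i} := by
      funext x
      rcases zmod2_cases (x.1 i) with hx | hx <;>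
        simp [zf, hchi, h, hx, qc] <;> decide
    rw [this]
    exact Submodule.sub_mem _ (one_mem_Dspan p k 1) (chi_mem_Dspan p k (by simp))

/-- elementary symmetric function of the XOR indicators. -/
def esym (r : ℕ) (u : QVertex k) : QVertex k → ZMod p :=
  ∑ A ∈ Finset.powersetCard r Finset.univ, ∏ i ∈ A, zf p k u i

lemma esym_mem_Dspan (r : ℕ) (u : QVertex k) : esym p k r u ∈ Dspan p k r := by
  refine Submodule.sum_mem _ fun A hA => ?_
  have hcard : A.card = r := (Finset.mem_powersetCard.1 hA).2
  have := Dspan_prod_mem p k A (fun i => zf p k u i) (fun _ => 1)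
    (fun i _ => zf_mem_Dspan p k u i)
  simpa [hcard] using this

lemma zf_apply_eq (u x : QVertex k) (i : Fin k) :
    zf p k u i x = if x.1 i ≠ u.1 i then 1 else 0 := by
  rcases zmod2_cases (x.1 i) with hx | hx <;> rcases zmod2_cases (u.1 i) with hu | hu <;>
    simp [zf, hx, hu, qc] <;> decide

lemma esym_apply (r : ℕ) (u x : QVertex k) :
    esym p k r u x = ((hammingDist x.1 u.1).choose r : ZMod p) := by
  classical
  set T : Finset (Fin k) := Finset.univ.filter (fun i => x.1 i ≠ u.1 i) with hT
  have hd : hammingDist x.1 u.1 = T.card := rfl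
  have hterm : ∀ A ∈ Finset.powersetCard r (Finset.univ : Finset (Fin k)),
      (∏ i ∈ A, zf p k u i) x = if A ⊆ T then 1 else 0 := by
    intro A _
    rw [Finset.prod_apply]
    by_cases hAT : A ⊆ T
    · rw [if_pos hAT]
      refine Finset.prod_eq_one fun i hi => ?_
      have : x.1 i ≠ u.1 i := (Finset.mem_filter.1 (hAT hi)).2
      simp [zf_apply_eq, this]
    · rw [if_neg hAT]
      obtain ⟨i, hiA, hiT⟩ := Finset.not_subset.1 hAT
      refine Finset.prod_eq_zero hiA ?_
      have : ¬ x.1 i ≠ u.1 i := fun h => hiT (Finset.mem_filter.2 ⟨Finset.mem_univ i, h⟩)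
      simp [zf_apply_eq, this]
  rw [esym, Finset.sum_apply, Finset.sum_congr rfl hterm, Finset.sum_boole]
  have hfilter : (Finset.powersetCard r (Finset.univ : Finset (Fin k))).filter (· ⊆ T)
      = Finset.powersetCard r T := by
    ext A
    simp only [Finset.mem_filter, Finset.mem_powersetCard]
    constructor
    · rintro ⟨⟨_, hc⟩, hsub⟩; exact ⟨hsub, hc⟩
    · rintro ⟨hsub, hc⟩; exact ⟨⟨Finset.subset_univ A, hc⟩, hsub⟩
  rw [hfilter, Finset.card_powersetCard, hd]

/-- the BBR-style polynomial detecting divisibility of the Hamming distance by `p^ℓ`. -/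
def gfun (ℓ : ℕ) (u : QVertex k) : QVertex k → ZMod p :=
  ∏ t ∈ Finset.range ℓ, (1 - (esym p k (p ^ t) u) ^ (p - 1))

lemma geom_sum_aux (hp : 1 ≤ p) : ∀ ℓ : ℕ, ∑ t ∈ Finset.range ℓ, (p - 1) * p ^ t = p ^ ℓ - 1
  | 0 => by simp
  | (ℓ + 1) => by
    rw [Finset.sum_range_succ, geom_sum_aux hp ℓ]
    have h1 : 1 ≤ p ^ ℓ := Nat.one_le_pow _ _ hp
    have h2 : (p - 1) * p ^ ℓ = p ^ ℓ * p - p ^ ℓ := by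
      rw [Nat.sub_mul, one_mul, mul_comm]
    have h3 : p ^ ℓ ≤ p ^ ℓ * p := Nat.le_mul_of_pos_right _ hp
    rw [pow_succ]
    omega

lemma gfun_mem_Dspan (ℓ : ℕ) (hp : 1 ≤ p) (u : QVertex k) :
    gfun p k ℓ u ∈ Dspan p k (p ^ ℓ - 1) := by
  rw [gfun, ← geom_sum_aux p hp ℓ]
  refine Dspan_prod_mem p k _ _ (fun t => (p - 1) * p ^ t) fun t _ => ?_
  exact Submodule.sub_mem _ (one_mem_Dspan p k _)
    (Dspan_pow_mem p k (esym_mem_Dspan p k (p ^ t) u) (p - 1))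

section Prime

variable (hp : p.Prime)
include hp

/-- key Lucas-theorem consequence: if `p^t` exactly divides `n` then `p ∤ C(n, p^t)`. -/
lemma lucas_cor {n t : ℕ} (h1 : p ^ t ∣ n) (h2 : ¬ p ^ (t + 1) ∣ n) :
    (n.choose (p ^ t) : ZMod p) ≠ 0 := by
  haveI : Fact p.Prime := ⟨hp⟩
  have hmod := Choose.choose_modEq_choose_mul_prod_range_choose (p := p) (n := n)
    (k := p ^ t) t
  have hpt : p ^ t / p ^ t = 1 := Nat.div_self (pow_pos hp.pos t)
  have hprod : ∀ i ∈ Finset.range t, ((n / p ^ i % p).choose (p ^ t / p ^ i % p) : ZMod p) = 1 := by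
    intro i hi
    have hit : i < t := Finset.mem_range.1 hi
    have hd : p ^ t / p ^ i = p ^ (t - i) := Nat.pow_div hit.le hp.pos
    have hz : p ^ (t - i) % p = 0 :=
      Nat.eq_zero_of_dvd_of_lt (Nat.dvd_mod_iff (dvd_refl p) |>.2
        (dvd_pow_self p (by omega))) (Nat.mod_lt _ hp.pos)
    rw [hd, hz, Nat.choose_zero_right, Nat.cast_one]
  have heq : (n.choose (p ^ t) : ZMod p) = ((n / p ^ t : ℕ) : ZMod p) := by
    have h := (ZMod.intCast_eq_intCast_iff _ _ _).2 hmod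
    push_cast at h
    rw [h, hpt, Finset.prod_congr rfl hprod, Finset.prod_const_one, mul_one,
      Nat.choose_one_right]
  rw [heq, Ne, ZMod.natCast_eq_zero_iff]
  intro hdvd
  apply h2
  obtain ⟨c, hc⟩ := h1
  obtain ⟨e, he⟩ : p ∣ c := by
    have : n / p ^ t = c := by rw [hc]; exact Nat.mul_div_cancel_left c (pow_pos hp.pos t)
    rwa [this] at hdvd
  exact ⟨e, by rw [hc, he, pow_succ]; ring⟩

lemma gfun_apply_self (ℓ : ℕ) (u : QVertex k) : gfun p k ℓ u u = 1 := by
  rw [gfun, Finset.prod_apply]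
  refine Finset.prod_eq_one fun t _ => ?_
  have h0 : hammingDist u.1 u.1 = 0 := hammingDist_self u.1
  have he : esym p k (p ^ t) u u = 0 := by
    rw [esym_apply, h0, Nat.choose_eq_zero_of_lt (pow_pos hp.pos t), Nat.cast_zero]
  have hppos : 0 < p - 1 := by have := hp.two_le; omega
  rw [Pi.sub_apply, Pi.one_apply, Pi.pow_apply, he, zero_pow (by omega), sub_zero]

lemma gfun_apply_eq_zero {ℓ : ℕ} (u x : QVertex k)
    (h : ¬ p ^ ℓ ∣ hammingDist x.1 u.1) : gfun p k ℓ u x = 0 := by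
  haveI : Fact p.Prime := ⟨hp⟩
  set d := hammingDist x.1 u.1 with hd
  have hℓ1 : 1 ≤ ℓ := by
    rcases Nat.eq_zero_or_pos ℓ with h0 | h0
    · exact absurd (h0 ▸ one_dvd d : p ^ ℓ ∣ d) h
    · exact h0
  have hex : ∃ t, ¬ p ^ (t + 1) ∣ d := ⟨ℓ - 1, by rwa [Nat.sub_add_cancel hℓ1]⟩
  set t := Nat.find hex with ht
  have h2 : ¬ p ^ (t + 1) ∣ d := Nat.find_spec hex
  have h1 : p ^ t ∣ d := by
    cases' Nat.eq_zero_or_pos t with h0 h0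
    · rw [h0, pow_zero]; exact one_dvd d
    · have := Nat.find_min hex (m := t - 1) (by omega)
      rw [not_not] at this
      have heq : t - 1 + 1 = t := by omega
      rwa [heq] at this
  have htl : t < ℓ := by
    have : t ≤ ℓ - 1 := Nat.find_min' hex (by rwa [Nat.sub_add_cancel hℓ1])
    omega
  rw [gfun, Finset.prod_apply]
  refine Finset.prod_eq_zero (Finset.mem_range.2 htl) ?_
  have hne := lucas_cor p hp h1 h2
  rw [Pi.sub_apply, Pi.one_apply, Pi.pow_apply, esym_apply, ← hd,
    ZMod.pow_card_sub_one_eq_one hne, sub_self]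

end Prime

lemma zmod2_sum_eq_hammingNorm (w : Fin k → ZMod 2) :
    ((hammingNorm w : ℕ) : ZMod 2) = ∑ i, w i := by
  classical
  rw [← Finset.sum_filter_ne_zero Finset.univ (f := w)]
  have : ∀ i ∈ Finset.univ.filter (fun i => w i ≠ 0), w i = 1 := by
    intro i hi
    rcases zmod2_cases (w i) with h | h
    · exact absurd h (Finset.mem_filter.1 hi).2
    · exact h
  rw [Finset.sum_congr rfl this, Finset.sum_const, nsmul_eq_mul, mul_one]
  rfl

lemma even_hammingDist {x y : Fin k → ZMod 2} (hx : Even (hammingNorm x))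
    (hy : Even (hammingNorm y)) : Even (hammingDist x y) := by
  have hcast : ((hammingDist x y : ℕ) : ZMod 2) = 0 := by
    rw [hammingDist_eq_hammingNorm, zmod2_sum_eq_hammingNorm]
    have hsub : ∑ i, (-x + y) i = -(∑ i, x i) + ∑ i, y i := by
      simp [Finset.sum_add_distrib]
    rw [hsub, ← zmod2_sum_eq_hammingNorm, ← zmod2_sum_eq_hammingNorm,
      (ZMod.natCast_eq_zero_iff _ _).2 hx.two_dvd,
      (ZMod.natCast_eq_zero_iff _ _).2 hy.two_dvd, neg_zero, add_zero]
  have := (ZMod.natCast_eq_zero_iff _ _).1 hcast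
  exact (even_iff_two_dvd).2 this

lemma not_dvd_dist {q : ℕ} (hq1 : 1 ≤ q) (hqodd : Odd q) (hk : k = 4 * q - 1)
    {u v : QVertex k} (huv : u ≠ v) (hnadj : ¬ (Hgraph k).Adj u v) :
    ¬ q ∣ hammingDist v.1 u.1 := by
  set d := hammingDist v.1 u.1 with hd
  have hdne : d ≠ 0 := fun h => huv (Subtype.ext (hammingDist_eq_zero.1 h)).symm
  have hdle : d ≤ k := by
    have := hammingDist_le_card_fintype (x := v.1) (y := u.1)
    simpa using this
  have hdeven : Even d := even_hammingDist k v.2 u.2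
  have hdne2 : d ≠ 2 * q := by
    intro hcon
    apply hnadj
    refine ⟨huv, ?_⟩
    show hammingDist u.1 v.1 = (k + 1) / 2
    rw [hammingDist_comm, ← hd, hcon]
    omega
  rintro ⟨c, hc⟩
  have hceven : Even c := by
    rcases (Nat.even_mul.1 (hc ▸ hdeven)) with h | h
    · exact absurd h (Nat.not_even_iff_odd.2 hqodd)
    · exact h
  obtain ⟨e, rfl⟩ := hceven
  have hlt : q * (e + e) < q * 4 := by
    rw [← hc]; omega
  have h4 : e + e < 4 := Nat.lt_of_mul_lt_mul_left hlt
  have he1 : e = 0 ∨ e = 1 := by omega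
  rcases he1 with rfl | rfl
  · exact hdne (by omega)
  · exact hdne2 (by rw [hc]; ring)

section MultiBlock

variable (m : ℕ)

lemma prod_mem_span {F A : Type*} [CommSemiring F] [CommSemiring A] [Algebra F A]
    {ι : Type*} [DecidableEq ι] (J : Finset ι) (f : ι → A) (S : ι → Set A)
    (h : ∀ j ∈ J, f j ∈ Submodule.span F (S j)) :
    ∏ j ∈ J, f j ∈ Submodule.span F
      {g | ∃ a : ι → A, (∀ j ∈ J, a j ∈ S j) ∧ g = ∏ j ∈ J, a j} := by
  induction J using Finset.induction with
  | empty => exact Submodule.subset_span ⟨fun _ => 1, by simp, by simp⟩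
  | @insert j J hjJ ih =>
    rw [Finset.prod_insert hjJ]
    have h1 := h j (Finset.mem_insert_self j J)
    have h2 := ih fun j' hj' => h j' (Finset.mem_insert_of_mem hj')
    have h3 := Submodule.mul_mem_mul h1 h2
    rw [Submodule.span_mul_span] at h3
    refine Submodule.span_le.2 ?_ h3
    rintro x ⟨a, ha, b, ⟨c, hc, rfl⟩, rfl⟩
    refine Submodule.subset_span ⟨Function.update c j a, ?_, ?_⟩
    · intro j' hj'
      rcases Finset.mem_insert.1 hj' with rfl | hj'
      · rw [Function.update_self]; exact ha
      · rw [Function.update_of_ne (ne_of_mem_of_not_mem hj' hjJ)]; exact hc j' hj'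
    · show a * ∏ j' ∈ J, c j' = _
      rw [Finset.prod_insert hjJ, Function.update_self]
      congr 1
      exact Finset.prod_congr rfl fun j' hj' =>
        (Function.update_of_ne (ne_of_mem_of_not_mem hj' hjJ) _ _).symm

lemma blockLift {f : QVertex k → ZMod p} {d : ℕ} (j : Fin m) (h : f ∈ Dspan p k d) :
    (fun v : Fin m → QVertex k => f (v j)) ∈ Submodule.span (ZMod p)
      {g | ∃ s : Finset (Fin k), s.card ≤ d ∧ g = fun v => chi p k s (v j)} := by
  let L : (QVertex k → ZMod p) →ₗ[ZMod p] ((Fin m → QVertex k) → ZMod p) :=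
    LinearMap.funLeft _ _ (fun v => v j)
  have hL : (fun v : Fin m → QVertex k => f (v j)) = L f := rfl
  rw [hL]
  have hm' := Submodule.mem_map_of_mem (f := L) h
  rw [Dspan, Submodule.map_span] at hm'
  refine Submodule.span_le.2 ?_ hm'
  rintro x ⟨g, ⟨s, hs, rfl⟩, rfl⟩
  exact Submodule.subset_span ⟨s, hs, rfl⟩

lemma fu_mem (ℓ : ℕ) (hp : 1 ≤ p) (u : Fin m → QVertex k) :
    (fun v : Fin m → QVertex k => ∏ j, gfun p k ℓ (u j) (v j)) ∈
      Submodule.span (ZMod p) {g | ∃ T : Fin m → Finset (Fin k),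
        (∀ j, (T j).card ≤ p ^ ℓ - 1) ∧
        g = fun v : Fin m → QVertex k => ∏ j, chi p k (T j) (v j)} := by
  classical
  have heq : (fun v : Fin m → QVertex k => ∏ j, gfun p k ℓ (u j) (v j))
      = ∏ j : Fin m, (fun v : Fin m → QVertex k => gfun p k ℓ (u j) (v j)) := by
    funext v; rw [Finset.prod_apply]
  rw [heq]
  have hmem := prod_mem_span (F := ZMod p) Finset.univ
    (fun j => (fun v : Fin m → QVertex k => gfun p k ℓ (u j) (v j)))
    (fun j => {g | ∃ s : Finset (Fin k), s.card ≤ p ^ ℓ - 1 ∧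
      g = fun v : Fin m → QVertex k => chi p k s (v j)})
    (fun j _ => blockLift p k m j (gfun_mem_Dspan p k ℓ hp (u j)))
  refine Submodule.span_le.2 ?_ hmem
  rintro x ⟨a, ha, rfl⟩
  choose T hT haT using fun j => ha j (Finset.mem_univ j)
  refine Submodule.subset_span ⟨T, hT, ?_⟩
  funext v
  rw [Finset.prod_apply]
  exact Finset.prod_congr rfl fun j _ => by rw [haT j]

lemma card_mon (q : ℕ) :
    Fintype.card {s : Finset (Fin k) // s.card < q} = ∑ i ∈ Finset.range q, k.choose i := by
  classical
  rw [Fintype.card_subtype]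
  have hset : (Finset.univ.filter fun s : Finset (Fin k) => s.card < q)
      = (Finset.range q).biUnion (fun i => Finset.powersetCard i Finset.univ) := by
    ext s
    simp only [Finset.mem_filter, Finset.mem_univ, true_and, Finset.mem_biUnion,
      Finset.mem_range, Finset.mem_powersetCard]
    constructor
    · intro h; exact ⟨s.card, h, Finset.subset_univ s, rfl⟩
    · rintro ⟨i, hi, -, rfl⟩; exact hi
  rw [hset, Finset.card_biUnion]
  · exact Finset.sum_congr rfl fun i _ => by
      rw [Finset.card_powersetCard, Finset.card_univ, Fintype.card_fin]
  · intro i _ j _ hij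
    rw [Function.onFun, Finset.disjoint_left]
    intro a hai haj
    rw [Finset.mem_powersetCard] at hai haj
    exact hij (hai.2 ▸ haj.2 ▸ rfl)

end MultiBlock

end AuxQOG

/-- for k = 4p^ℓ - 1 with p an odd prime,
α(H_k^{⊠m}) ≤ (C(k,0) + ⋯ + C(k, p^ℓ - 1))^m. -/
theorem indepNum_strongPow_Hgraph_le (p ℓ m k : ℕ) (hp : p.Prime) (hodd : Odd p)
    (hℓ : 0 < ℓ) (hm : 0 < m) (hk : k = 4 * p ^ ℓ - 1) :
    ((Hgraph k).strongPow m).indepNum' ≤ (∑ i ∈ Finset.range (p ^ ℓ), k.choose i) ^ m := by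
  classical
  haveI : Fact p.Prime := ⟨hp⟩
  set q : ℕ := p ^ ℓ with hq
  have hq1 : 1 ≤ q := Nat.one_le_pow _ _ hp.pos
  have hqodd : Odd q := hodd.pow
  set N : ℕ := (∑ i ∈ Finset.range q, k.choose i) ^ m with hN
  have key : ∀ (n : ℕ) (s : Finset (Fin m → QVertex k)),
      (((Hgraph k).strongPow m)ᶜ).IsNClique n s → n ≤ N := by
    intro n s hsn
    obtain ⟨hclique, hcard⟩ := hsn
    let f : s → ((Fin m → QVertex k) → ZMod p) :=
      fun u => fun v => ∏ j, gfun p k ℓ (u.1 j) (v j)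
    have hdiag : ∀ u : s, f u u.1 = 1 := by
      intro u
      exact Finset.prod_eq_one fun j _ => gfun_apply_self p k hp ℓ (u.1 j)
    have hoff : ∀ u w : s, u ≠ w → f u w.1 = 0 := by
      intro u w huw
      have hne : u.1 ≠ w.1 := fun h => huw (Subtype.ext h)
      have hadj : (((Hgraph k).strongPow m)ᶜ).Adj u.1 w.1 :=
        hclique u.2 w.2 hne
      rw [SimpleGraph.compl_adj] at hadj
      obtain ⟨hne', hnadj⟩ := hadj
      have hj : ∃ j, u.1 j ≠ w.1 j ∧ ¬ (Hgraph k).Adj (u.1 j) (w.1 j) := by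
        by_contra hcon
        push_neg at hcon
        exact hnadj ⟨hne', fun i => by
          by_cases hi : u.1 i = w.1 i
          · exact Or.inl hi
          · exact Or.inr (hcon i hi)⟩
      obtain ⟨j, hj1, hj2⟩ := hj
      have hnd : ¬ q ∣ hammingDist (w.1 j).1 (u.1 j).1 :=
        not_dvd_dist k hq1 hqodd hk hj1 hj2
      exact Finset.prod_eq_zero (Finset.mem_univ j)
        (gfun_apply_eq_zero p k hp (u.1 j) (w.1 j) hnd)
    -- the generating set of monomial functions
    let gens : Finset ((Fin m → QVertex k) → ZMod p) :=
      (Finset.univ : Finset (Fin m → {t : Finset (Fin k) // t.card < q})).image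
        (fun T => fun v : Fin m → QVertex k => ∏ j, chi p k (T j).1 (v j))
    have hmem : ∀ u : s, f u ∈ Submodule.span (ZMod p) (gens : Set ((Fin m → QVertex k) → ZMod p)) := by
      intro u
      have h1 := fu_mem p k m ℓ hp.one_lt.le (u.1)
      refine Submodule.span_le.2 ?_ h1
      rintro x ⟨T, hT, rfl⟩
      refine Submodule.subset_span ?_
      refine Finset.mem_coe.2 (Finset.mem_image.2 ?_)
      exact ⟨fun j => ⟨T j, by have := hT j; omega⟩, Finset.mem_univ _, rfl⟩
    set V := Submodule.span (ZMod p) (gens : Set ((Fin m → QVertex k) → ZMod p)) with hV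
    let f' : s → V := fun u => ⟨f u, hmem u⟩
    have hli : LinearIndependent (ZMod p) f' := by
      rw [Fintype.linearIndependent_iff]
      intro g hg u
      have hg' : ∑ w : s, g w • f w = 0 := by
        have := congrArg (Submodule.subtype V) hg
        rw [map_sum] at this
        simpa using this
      have hval := congrFun hg' u.1
      simp only [Finset.sum_apply, Pi.smul_apply, smul_eq_mul, Pi.zero_apply] at hval
      rw [Finset.sum_eq_single u (fun w _ hwu => by rw [hoff w u hwu, mul_zero])
        (fun h => absurd (Finset.mem_univ u) h)] at hval
      rwa [hdiag u, mul_one] at hval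
    have hcard1 : Fintype.card s ≤ Module.finrank (ZMod p) V :=
      hli.fintype_card_le_finrank
    have hcard2 : Module.finrank (ZMod p) V ≤ gens.card :=
      finrank_span_finset_le_card gens
    have hcard3 : gens.card ≤ N := by
      calc gens.card ≤ (Finset.univ : Finset (Fin m → {t : Finset (Fin k) // t.card < q})).card :=
            Finset.card_image_le
        _ = Fintype.card (Fin m → {t : Finset (Fin k) // t.card < q}) := Finset.card_univ
        _ = Fintype.card {t : Finset (Fin k) // t.card < q} ^ m := by
            rw [Fintype.card_fun, Fintype.card_fin]
        _ = N := by rw [card_mon k q]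
    have : n = Fintype.card s := by rw [Fintype.card_coe, hcard]
    omega
  show ((Hgraph k).strongPow m)ᶜ.cliqueNum ≤ N
  rw [SimpleGraph.cliqueNum]
  refine csSup_le ⟨0, ⟨∅, SimpleGraph.isNClique_empty.2 rfl⟩⟩ ?_
  rintro n ⟨s, hs⟩
  exact key n s hs
end
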